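/- Let m and n be coprime positive integers. The number of m/n-parking functions, i.e. functions f : {1,…,n} → {1,…,m} such that m·|{i : f(i) ≤ k}| ≥ k·n for every k with 1 ≤ k ≤ m, equals m^{n−1}. -/

import Mathlib

/-- An `m/n`-parking function, encoded as `f : Fin n → Fin m` where the value
`f i : Fin m` represents the integer `(f i : ℕ) + 1 ∈ {1,…,m}`: for every
`1 ≤ k ≤ m`, the number of indices `i` with `f(i) ≤ k` satisfies
`m·|{i : f(i) ≤ k}| ≥ k·n`. -/
def IsParkingFunction (m n : ℕ) (f : Fin n → Fin m) : Prop :=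
  ∀ k : ℕ, 1 ≤ k → k ≤ m →
    k * n ≤ m * (Finset.univ.filter fun i : Fin n => (f i : ℕ) + 1 ≤ k).card

namespace ParkAux

lemma ediv_eq_of (a q m : ℤ) (hm : 0 < m) (h1 : q * m ≤ a) (h2 : a < (q + 1) * m) :
    a / m = q := by
  have h3 : a = (a - q * m) + q * m := by ring
  rw [h3, Int.add_mul_ediv_right _ _ hm.ne',
    Int.ediv_eq_zero_of_lt (by linarith) (by linarith), zero_add]

lemma key_term (m r c k : ℤ) (hm : 0 < m) (hr0 : 0 ≤ r) (hr : r < m)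
    (hc0 : 0 ≤ c) (hc : c < m) (hk0 : 0 ≤ k) (hk : k ≤ m) :
    (k - c - r + m - 1) / m - (-c - r + m - 1) / m
      = if (r + c) % m < k then 1 else 0 := by
  rcases lt_or_ge (r + c) m with hlt | hge
  · have hmod : (r + c) % m = r + c := Int.emod_eq_of_lt (by linarith) hlt
    rw [hmod]
    have t2 : (-c - r + m - 1) / m = 0 :=
      Int.ediv_eq_zero_of_lt (by linarith) (by linarith)
    rcases lt_or_ge (r + c) k with h1 | h1
    · have t1 : (k - c - r + m - 1) / m = 1 :=
        ediv_eq_of _ _ _ hm (by linarith) (by linarith)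
      rw [t1, t2, if_pos h1]; norm_num
    · have t1 : (k - c - r + m - 1) / m = 0 :=
        Int.ediv_eq_zero_of_lt (by linarith) (by linarith)
      rw [t1, t2, if_neg (not_lt.mpr h1)]; norm_num
  · have hdiv : (r + c) / m = 1 := ediv_eq_of _ _ _ hm (by linarith) (by linarith)
    have hmod : (r + c) % m = r + c - m := by
      rw [Int.emod_def, hdiv]; ring
    rw [hmod]
    have t2 : (-c - r + m - 1) / m = -1 :=
      ediv_eq_of _ _ _ hm (by linarith) (by linarith)
    rcases lt_or_ge (r + c - m) k with h1 | h1
    · have t1 : (k - c - r + m - 1) / m = 0 :=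
        Int.ediv_eq_zero_of_lt (by linarith) (by linarith)
      rw [t1, t2, if_pos h1]; norm_num
    · have t1 : (k - c - r + m - 1) / m = -1 :=
        ediv_eq_of _ _ _ hm (by linarith) (by linarith)
      rw [t1, t2, if_neg (not_lt.mpr h1)]; norm_num

variable {m n : ℕ} [NeZero m] (g : Fin n → ZMod m)

/-- Cumulative counting function of the lifts of the values of `g`. -/
noncomputable def N (k : ℤ) : ℤ :=
  ∑ i : Fin n, (k - ((g i).val : ℤ) + m - 1) / m

/-- The discrepancy function `H k = m * N k - k * n`; it is `m`-periodic. -/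
noncomputable def H (k : ℤ) : ℤ := m * N g k - k * n

lemma N_period (k t : ℤ) : N g (k + t * m) = N g k + t * n := by
  have hm : (0 : ℤ) < m := by exact_mod_cast (NeZero.pos m)
  unfold N
  have : ∀ i : Fin n, (k + t * m - ((g i).val : ℤ) + m - 1) / m
      = (k - ((g i).val : ℤ) + m - 1) / m + t := by
    intro i
    have h1 : k + t * m - ((g i).val : ℤ) + m - 1
        = (k - ((g i).val : ℤ) + m - 1) + t * m := by ring
    rw [h1, Int.add_mul_ediv_right _ _ hm.ne']
  rw [Finset.sum_congr rfl fun i _ => this i, Finset.sum_add_distrib,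
    Finset.sum_const, Finset.card_univ, Fintype.card_fin]
  push_cast; ring

lemma H_period (k t : ℤ) : H g (k + t * m) = H g k := by
  unfold H; rw [N_period]; push_cast; ring

lemma H_congr {a b : ℤ} (hd : (m : ℤ) ∣ a - b) : H g a = H g b := by
  obtain ⟨t, ht⟩ := hd
  have : a = b + t * m := by linarith
  rw [this, H_period]

lemma H_inj (hco : Nat.Coprime m n) {a b : ℤ} (hab : H g a = H g b) :
    (m : ℤ) ∣ a - b := by
  have h1 : (m : ℤ) ∣ H g a + a * n := ⟨N g a, by unfold H; ring⟩
  have h2 : (m : ℤ) ∣ H g b + b * n := ⟨N g b, by unfold H; ring⟩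
  have h3 : (m : ℤ) ∣ (a - b) * n := by
    have := dvd_sub h1 h2
    rw [hab] at this
    have h4 : H g b + a * n - (H g b + b * n) = (a - b) * n := by ring
    rwa [h4] at this
  exact (Nat.isCoprime_iff_coprime.mpr hco).dvd_of_dvd_mul_right h3

lemma N_shift_card (c k : ℤ) (hc0 : 0 ≤ c) (hc : c < m) (hk0 : 0 ≤ k) (hk : k ≤ m) :
    N g (k - c) - N g (-c)
      = ((Finset.univ.filter fun i : Fin n =>
          ((((g i).val : ℤ) + c) % m) < k).card : ℤ) := by
  have hm : (0 : ℤ) < m := by exact_mod_cast (NeZero.pos m)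
  unfold N
  rw [← Finset.sum_sub_distrib, Finset.card_filter, Nat.cast_sum]
  refine Finset.sum_congr rfl fun i _ => ?_
  have hr0 : (0 : ℤ) ≤ ((g i).val : ℤ) := by positivity
  have hr : (((g i).val : ℤ)) < m := by exact_mod_cast ZMod.val_lt (g i)
  have := key_term m ((g i).val : ℤ) c k hm hr0 hr hc0 hc hk0 hk
  rw [show k - c - ((g i).val : ℤ) + m - 1 = k - c - ((g i).val : ℤ) + ↑m - 1 from rfl]
  rw [this]
  split_ifs <;> simp

/-- `H g (k - c') - H g (-c')` measures the parking inequality for the translate. -/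
lemma H_sub (k c' : ℤ) : H g (k - c') - H g (-c')
    = m * (N g (k - c') - N g (-c')) - k * n := by
  unfold H; ring

/-- The main equivalence: the translate of `g` by `c` is a parking function iff
`H` attains its global minimum at `-c.val`. -/
lemma park_iff (c : ZMod m) :
    IsParkingFunction m n (fun i => (⟨(g i + c).val, ZMod.val_lt _⟩ : Fin m))
      ↔ ∀ j : ℤ, H g (-(c.val : ℤ)) ≤ H g j := by
  have hm : (0 : ℤ) < m := by exact_mod_cast (NeZero.pos m)
  set c' : ℤ := (c.val : ℤ) with hc'def
  have hc0 : 0 ≤ c' := by positivity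
  have hcm : c' < m := by rw [hc'def]; exact_mod_cast ZMod.val_lt c
  have hcard : ∀ k : ℕ, (k : ℤ) ≤ m →
      ((Finset.univ.filter fun i : Fin n => ((g i + c).val : ℕ) + 1 ≤ k).card : ℤ)
        = N g ((k : ℤ) - c') - N g (-c') := by
    intro k hk
    have hset : (Finset.univ.filter fun i : Fin n => ((g i + c).val : ℕ) + 1 ≤ k)
        = Finset.univ.filter fun i : Fin n => ((((g i).val : ℤ) + c') % m) < k := by
      apply Finset.filter_congr
      intro i _
      have hval : ((g i + c).val : ℕ) = ((g i).val + c.val) % m := ZMod.val_add _ _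
      have hcast : ((((g i).val + c.val) % m : ℕ) : ℤ) = (((g i).val : ℤ) + c') % m := by
        push_cast; rfl
      rw [hval, ← hcast]
      generalize ((g i).val + c.val) % m = s
      constructor
      · intro hh
        exact_mod_cast Nat.lt_of_succ_le hh
      · intro hh
        exact Nat.succ_le_of_lt (by exact_mod_cast hh)
    rw [hset, N_shift_card g c' k hc0 hcm (by positivity) hk]
  constructor
  · intro hpark j
    set k0 : ℤ := (j + c') % m with hk0def
    have hk00 : 0 ≤ k0 := Int.emod_nonneg _ hm.ne'
    have hk0m : k0 < m := Int.emod_lt_of_pos _ hm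
    have hjmod : H g j = H g (k0 - c') := by
      apply H_congr
      refine ⟨(j + c') / m, ?_⟩
      have hed : (j + c') % m = (j + c') - m * ((j + c') / m) := Int.emod_def _ _
      have : j - (k0 - c') = (j + c') - k0 := by ring
      rw [this, hk0def, hed]; ring
    rw [hjmod]
    rcases eq_or_lt_of_le hk00 with h0 | h0
    · rw [← h0]; norm_num
    · set k : ℕ := k0.toNat with hkdef
      have hkz : (k : ℤ) = k0 := Int.toNat_of_nonneg hk00
      have hk1 : 1 ≤ k := by omega
      have hkm : k ≤ m := by
        have : (k : ℤ) < m := by rw [hkz]; exact hk0m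
        exact_mod_cast this.le
      have hpk := hpark k hk1 hkm
      have hpkz : (k : ℤ) * n ≤ (m : ℤ) *
          ((Finset.univ.filter fun i : Fin n => ((g i + c).val : ℕ) + 1 ≤ k).card : ℤ) := by
        exact_mod_cast hpk
      rw [hcard k (by rw [hkz]; exact hk0m.le)] at hpkz
      have hs := H_sub g (k : ℤ) c'
      rw [hkz] at hs
      rw [mul_sub] at hpkz hs
      rw [hkz] at hpkz
      linarith
  · intro hmin k hk1 hkm
    have h1 : H g (-c') ≤ H g ((k : ℤ) - c') := hmin _
    have h2 := hcard k (by exact_mod_cast hkm)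
    have hs := H_sub g (k : ℤ) c'
    have hgoal : (k : ℤ) * n ≤ (m : ℤ) *
        ((Finset.univ.filter fun i : Fin n => ((g i + c).val : ℕ) + 1 ≤ k).card : ℤ) := by
      rw [h2]; linarith
    exact_mod_cast hgoal

/-- Pollak's argument: for every `g` there is exactly one translate which is a
parking function. -/
lemma exists_unique_shift (hco : Nat.Coprime m n) (g : Fin n → ZMod m) :
    ∃! c : ZMod m, IsParkingFunction m n
      (fun i => (⟨(g i + c).val, ZMod.val_lt _⟩ : Fin m)) := by
  have hm : (0 : ℤ) < m := by exact_mod_cast (NeZero.pos m)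
  obtain ⟨j0, hj0mem, hj0min⟩ :=
    Finset.exists_min_image (Finset.Ico (0 : ℤ) m) (H g) ⟨0, by simp [hm, NeZero.pos m]⟩
  have hminall : ∀ j : ℤ, H g j0 ≤ H g j := by
    intro j
    have hjm : H g j = H g (j % m) := by
      apply H_congr
      exact ⟨j / m, by rw [Int.emod_def]; ring⟩
    rw [hjm]
    exact hj0min _ (Finset.mem_Ico.mpr ⟨Int.emod_nonneg _ hm.ne', Int.emod_lt_of_pos _ hm⟩)
  refine ⟨((-j0 : ℤ) : ZMod m), ?_, ?_⟩
  · apply (park_iff g ((-j0 : ℤ) : ZMod m)).mpr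
    have hcv : (((((-j0 : ℤ) : ZMod m)).val : ℤ) : ZMod m) = ((-j0 : ℤ) : ZMod m) := by
      rw [Int.cast_natCast]
      exact ZMod.natCast_rightInverse _
    have hdvd : (m : ℤ) ∣ ((((-j0 : ℤ) : ZMod m)).val : ℤ) - (-j0) :=
      ((ZMod.intCast_eq_intCast_iff _ _ _).mp hcv).symm.dvd
    have heq : H g (-((((-j0 : ℤ) : ZMod m)).val : ℤ)) = H g j0 := by
      apply H_congr
      obtain ⟨t, ht⟩ := hdvd
      exact ⟨-t, by linarith⟩
    intro j
    rw [heq]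
    exact hminall j
  · intro c1 hc1
    set c := ((-j0 : ℤ) : ZMod m)
    -- both c1 and c give minima, so H g (-c1') = H g (-c')
    have hmin1 := (park_iff g c1).mp hc1
    have hcv : (((c.val : ℤ)) : ZMod m) = ((-j0 : ℤ) : ZMod m) := by
      rw [Int.cast_natCast]
      exact ZMod.natCast_rightInverse _
    have hdvd : (m : ℤ) ∣ ((c.val : ℤ)) - (-j0) :=
      ((ZMod.intCast_eq_intCast_iff _ _ _).mp hcv).symm.dvd
    have heq : H g (-(c.val : ℤ)) = H g j0 := by
      apply H_congr
      obtain ⟨t, ht⟩ := hdvd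
      exact ⟨-t, by linarith⟩
    have hle1 : H g (-(c1.val : ℤ)) ≤ H g (-(c.val : ℤ)) := hmin1 _
    have hle2 : H g (-(c.val : ℤ)) ≤ H g (-(c1.val : ℤ)) := by
      rw [heq]; exact hminall _
    have hEq : H g (-(c1.val : ℤ)) = H g (-(c.val : ℤ)) := le_antisymm hle1 hle2
    have hdvd2 : (m : ℤ) ∣ (-(c1.val : ℤ)) - (-(c.val : ℤ)) := H_inj g hco hEq
    have hb1 : ((c1.val : ℤ)) < m := by exact_mod_cast ZMod.val_lt c1
    have hb2 : ((c.val : ℤ)) < m := by exact_mod_cast ZMod.val_lt c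
    have hzero : (-(c1.val : ℤ)) - (-(c.val : ℤ)) = 0 := by
      refine Int.eq_zero_of_abs_lt_dvd hdvd2 ?_
      rw [abs_lt]
      constructor <;> [push_cast; push_cast] <;> omega
    have hvals : c1.val = c.val := by omega
    exact ZMod.val_injective m hvals

end ParkAux

/-- For coprime positive integers `m` and `n`, the number of
`m/n`-parking functions equals `m^{n−1}`. -/
theorem card_parking_functions (m n : ℕ) (hm : 0 < m) (hn : 0 < n)
    (h : Nat.Coprime m n) :
    Nat.card {f : Fin n → Fin m // IsParkingFunction m n f} = m ^ (n - 1) := by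
  haveI : NeZero m := ⟨hm.ne'⟩
  set S := {f : Fin n → Fin m // IsParkingFunction m n f} with hS
  have key : ∀ g : Fin n → ZMod m, ∃! c : ZMod m, IsParkingFunction m n
      (fun i => (⟨(g i + c).val, ZMod.val_lt _⟩ : Fin m)) :=
    ParkAux.exists_unique_shift h
  let Φ : S × ZMod m → (Fin n → ZMod m) :=
    fun p => fun i => (((p.1.1 i : ℕ) : ZMod m)) - p.2
  have hΦpark : ∀ (f : S) (c : ZMod m) (i : Fin n),
      (Φ (f, c) i + c).val = (f.1 i : ℕ) := by
    intro f c i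
    show ((((f.1 i : ℕ) : ZMod m)) - c + c).val = (f.1 i : ℕ)
    rw [sub_add_cancel]
    exact ZMod.val_cast_of_lt (f.1 i).isLt
  have hpred : ∀ (f : S) (c : ZMod m), IsParkingFunction m n
      (fun i => (⟨(Φ (f, c) i + c).val, ZMod.val_lt _⟩ : Fin m)) := by
    intro f c
    have : (fun i => (⟨(Φ (f, c) i + c).val, ZMod.val_lt _⟩ : Fin m)) = f.1 := by
      funext i
      exact Fin.ext (hΦpark f c i)
    rw [this]
    exact f.2
  have hΦbij : Function.Bijective Φ := by
    constructor
    · rintro ⟨f, c⟩ ⟨f', c'⟩ hff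
      have hcc : c = c' := by
        have h1 := hpred f c
        have h2 := hpred f' c'
        rw [hff] at h1
        exact ((key (Φ (f', c'))).unique h1 h2)
      have hfe : f = f' := by
        apply Subtype.ext
        funext i
        have := congrFun hff i
        simp only [Φ, hcc] at this
        have h2 : (((f.1 i : ℕ) : ZMod m)) = (((f'.1 i : ℕ) : ZMod m)) :=
          sub_left_inj.mp this
        apply Fin.ext
        have := congrArg ZMod.val h2
        rwa [ZMod.val_cast_of_lt (f.1 i).isLt, ZMod.val_cast_of_lt (f'.1 i).isLt] at this
      rw [hfe, hcc]
    · intro g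
      obtain ⟨c, hc, -⟩ := key g
      refine ⟨(⟨fun i => (⟨(g i + c).val, ZMod.val_lt _⟩ : Fin m), hc⟩, c), ?_⟩
      funext i
      show ((((g i + c).val : ℕ) : ZMod m)) - c = g i
      rw [ZMod.natCast_rightInverse _, add_sub_cancel_right]
  have hcards : Nat.card S * m = m ^ n := by
    have h1 : Nat.card (S × ZMod m) = Nat.card (Fin n → ZMod m) :=
      Nat.card_eq_of_bijective Φ hΦbij
    rw [Nat.card_prod, Nat.card_zmod] at h1
    rw [h1, Nat.card_eq_fintype_card, Fintype.card_fun, Fintype.card_fin, ZMod.card]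
  have hpow : m ^ n = m ^ (n - 1) * m := by
    conv_lhs => rw [show n = (n - 1) + 1 by omega]
    rw [pow_succ]
  exact Nat.eq_of_mul_eq_mul_right hm (by rw [hcards, hpow])
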